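/- For all integers n ≥ 1 and k ≥ 1, the number of Catalan words of length n with exactly k runs of weak descents equals the number of Catalan words of length n with exactly k runs of ascents. -/

import Mathlib

/-- The set of Catalan words of length `n`: words `w` over ℕ with `w 1 = 0` and
`w (i+1) ≤ w i + 1` for all `i`. -/
def CatalanWord (n : ℕ) : Set (List ℕ) :=
  {w | w.length = n ∧ w.getD 0 0 = 0 ∧
    ∀ i, i + 1 < n → w.getD (i + 1) 0 ≤ w.getD i 0 + 1}

/-- Number of runs of ascents of `w`: `1 + #{i : w i ≥ w (i+1)}`. -/
def ascRuns (w : List ℕ) : ℕ :=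
  1 + ((Finset.range (w.length - 1)).filter
    (fun i => w.getD (i + 1) 0 ≤ w.getD i 0)).card

/-- Number of runs of weak descents of `w`: `1 + #{i : w i < w (i+1)}`. -/
def wDescRuns (w : List ℕ) : ℕ :=
  1 + ((Finset.range (w.length - 1)).filter
    (fun i => w.getD i 0 < w.getD (i + 1) 0)).card

/-- Intrinsic Catalan predicate. -/
def IsCat (w : List ℕ) : Prop :=
  w.getD 0 0 = 0 ∧ List.Chain' (fun a b => b ≤ a + 1) w

/-- number of weak descents (adjacent pairs a ≥ b). -/
def des : List ℕ → ℕ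
  | a :: b :: l => (if b ≤ a then 1 else 0) + des (b :: l)
  | _ => 0

/-- number of strict ascents. -/
def asc : List ℕ → ℕ
  | a :: b :: l => (if a < b then 1 else 0) + asc (b :: l)
  | _ => 0

lemma des_add_asc : ∀ w : List ℕ, w ≠ [] → des w + asc w + 1 = w.length
  | [a], _ => by simp [des, asc]
  | a :: b :: l, _ => by
      have := des_add_asc (b :: l) (by simp)
      simp only [des, asc, List.length_cons] at this ⊢
      by_cases h : b ≤ a
      · rw [if_pos h, if_neg (by omega)]; omega
      · rw [if_neg h, if_pos (by omega)]; omega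

/-- the involution -/
def phi (w : List ℕ) : List ℕ :=
  if h : w = [] ∨ 0 ∉ w then [] else
    have h0 : 0 ∈ w := by tauto
    have hd : w.reverse.dropWhile (· ≠ 0) ≠ [] := by
      intro hcon
      have := List.dropWhile_eq_nil_iff.mp hcon 0 (by simpa using h0)
      simp at this
    have hlen : (w.reverse.takeWhile (· ≠ 0)).length +
        (w.reverse.dropWhile (· ≠ 0)).length = w.length := by
      rw [← List.length_append, List.takeWhile_append_dropWhile, List.length_reverse]
    have hdpos : 0 < (w.reverse.dropWhile (· ≠ 0)).length := List.length_pos_iff.mpr hd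
    phi (((w.reverse.takeWhile (· ≠ 0)).reverse).map (· - 1)) ++
      0 :: (phi ((w.reverse.dropWhile (· ≠ 0)).tail.reverse)).map (· + 1)
termination_by w.length
decreasing_by
  · simp only [List.length_map, List.length_reverse, List.unattach_reverse, List.unattach_attach]; omega
  · simp only [List.length_reverse, List.length_tail, List.unattach_reverse, List.unattach_attach]; omega

lemma phi_nil : phi [] = [] := by rw [phi]; simp

lemma phi_decomp (u t : List ℕ) (ht : 0 ∉ t) :
    phi (u ++ 0 :: t) = phi (t.map (· - 1)) ++ 0 :: (phi u).map (· + 1) := by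
  rw [phi, dif_neg (by simp)]
  have hrev : (u ++ 0 :: t).reverse = t.reverse ++ 0 :: u.reverse := by simp
  have hpos : ∀ a ∈ t.reverse, (fun x => decide (x ≠ 0)) a = true := by
    intro a ha; simp at ha ⊢; exact fun hc => ht (hc ▸ ha)
  have htw : ((u ++ 0 :: t).reverse).takeWhile (· ≠ 0) = t.reverse := by
    rw [hrev, List.takeWhile_append_of_pos hpos, List.takeWhile_cons_of_neg (by simp)]
    simp
  have hdw : ((u ++ 0 :: t).reverse).dropWhile (· ≠ 0) = 0 :: u.reverse := by
    rw [hrev, List.dropWhile_append_of_pos hpos, List.dropWhile_cons_of_neg (by simp)]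
  show phi ((((u ++ 0 :: t).reverse.takeWhile (· ≠ 0)).reverse).map (· - 1)) ++
      0 :: (phi (((u ++ 0 :: t).reverse.dropWhile (· ≠ 0)).tail.reverse)).map (· + 1) = _
  rw [htw, hdw]
  simp

/-- split off the last zero -/
lemma exists_last_zero : ∀ w : List ℕ, 0 ∈ w → ∃ u t, w = u ++ 0 :: t ∧ 0 ∉ t := by
  intro w
  induction w with
  | nil => simp
  | cons a l ih =>
    intro _
    by_cases hl : 0 ∈ l
    · obtain ⟨u, t, rfl, ht⟩ := ih hl
      exact ⟨a :: u, t, rfl, ht⟩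
    · have ha : a = 0 := by
        rcases List.mem_cons.mp (by assumption : (0:ℕ) ∈ a :: l) with h | h
        · exact h.symm
        · exact absurd h hl
      exact ⟨[], l, by simp [ha], hl⟩

lemma isCat_decomp {u t : List ℕ} (ht : 0 ∉ t) (h : IsCat (u ++ 0 :: t)) :
    IsCat u ∧ IsCat (t.map (· - 1)) := by
  obtain ⟨hh, hc⟩ := h
  have hcu : List.Chain' (fun a b => b ≤ a + 1) u := hc.prefix ⟨0 :: t, rfl⟩
  have hct : List.Chain' (fun a b => b ≤ a + 1) (0 :: t) := hc.suffix ⟨u, rfl⟩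
  constructor
  · refine ⟨?_, hcu⟩
    cases u with
    | nil => rfl
    | cons x l => simpa using hh
  · constructor
    · cases t with
      | nil => rfl
      | cons x s =>
        have h1 : x ≤ 0 + 1 := List.isChain_cons_cons.mp hct |>.1
        have h2 : x ≠ 0 := fun hc' => ht (by simp [hc'])
        simp
        omega
    · have hct' : List.Chain' (fun a b => b ≤ a + 1) t := hct.tail
      rw [List.Chain', List.isChain_map]
      exact hct'.imp (by intro a b hab; omega)

lemma isCat_comp {u c : List ℕ} (hu : IsCat u) (hc : IsCat c) :
    IsCat (u ++ 0 :: c.map (· + 1)) := by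
  constructor
  · cases u with
    | nil => rfl
    | cons x l => simpa using hu.1
  · rw [List.Chain', List.isChain_append]
    refine ⟨hu.2, ?_, ?_⟩
    · rw [List.isChain_cons]
      constructor
      · intro y hy
        cases c with
        | nil => simp at hy
        | cons x s =>
          have : x = 0 := hc.1
          simp [this] at hy
          omega
      · rw [List.isChain_map]
        exact hc.2.imp (by intro a b hab; omega)
    · intro x _ y hy
      simp at hy
      omega

lemma des_map_succ : ∀ l : List ℕ, des (l.map (· + 1)) = des l
  | [] => rfl
  | [a] => rfl
  | a :: b :: l => by
      have := des_map_succ (b :: l)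
      simp only [List.map_cons] at *
      simp only [des, this, Nat.add_le_add_iff_right]

lemma des_map_pred : ∀ l : List ℕ, 0 ∉ l → des (l.map (· - 1)) = des l
  | [], _ => rfl
  | [a], _ => rfl
  | a :: b :: l, h => by
      have hrec := des_map_pred (b :: l) (by simp at h ⊢; tauto)
      have ha : a ≠ 0 := by simp at h; tauto
      have hb : b ≠ 0 := by simp at h; tauto
      simp only [List.map_cons] at *
      simp only [des, hrec]
      congr 1
      by_cases hba : b ≤ a
      · rw [if_pos hba, if_pos (by omega)]
      · rw [if_neg hba, if_neg (by omega)]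

lemma des_append_zero : ∀ u t : List ℕ,
    des (u ++ 0 :: t) = des u + des (0 :: t) + (if u = [] then 0 else 1)
  | [], t => by simp [des]
  | [a], t => by simp [des]; ring
  | a :: b :: l, t => by
      have := des_append_zero (b :: l) t
      simp only [List.cons_append] at *
      simp only [des] at *
      simp only [if_neg (by simp : ¬(b :: l = []))] at this
      simp only [this, if_neg (by simp : ¬(a :: b :: l = []))]
      ring

lemma des_zero_cons {t : List ℕ} (h : 0 ∉ t) : des (0 :: t) = des t := by
  cases t with
  | nil => rfl
  | cons x s =>
    have hx : x ≠ 0 := by simp at h; tauto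
    simp only [des, if_neg (by omega : ¬ x ≤ 0), Nat.zero_add]

lemma map_pred_succ : ∀ t : List ℕ, 0 ∉ t → (t.map (· - 1)).map (· + 1) = t
  | [], _ => rfl
  | a :: l, h => by
      have := map_pred_succ l (by simp at h; tauto)
      have ha : a ≠ 0 := by simp at h; tauto
      simp only [List.map_cons, this, List.cons.injEq, and_true]
      omega

lemma zero_mem_of_isCat {w : List ℕ} (hw : IsCat w) (hne : w ≠ []) : 0 ∈ w := by
  cases w with
  | nil => exact absurd rfl hne
  | cons a l =>
    have : a = 0 := hw.1
    simp [this]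

lemma phi_main : ∀ (n : ℕ) (w : List ℕ), w.length ≤ n → IsCat w →
    (phi w).length = w.length ∧ IsCat (phi w) ∧
    (w ≠ [] → des (phi w) + des w + 1 = w.length) ∧ phi (phi w) = w := by
  intro n
  induction n with
  | zero =>
    intro w hw _
    have : w = [] := List.length_eq_zero_iff.mp (Nat.le_zero.mp hw)
    subst this
    simp [phi_nil, IsCat, List.Chain']
  | succ n ih =>
    intro w hw hcat
    by_cases hne : w = []
    · subst hne; simp [phi_nil, IsCat, List.Chain']
    obtain ⟨u, t, rfl, ht⟩ := exists_last_zero w (zero_mem_of_isCat hcat hne)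
    obtain ⟨hcu, hct'⟩ := isCat_decomp ht hcat
    have hlen : (u ++ 0 :: t).length = u.length + t.length + 1 := by simp; omega
    have hut : u.length ≤ n ∧ t.length ≤ n := by omega
    have hlt' : (t.map (· - 1)).length = t.length := by simp
    obtain ⟨hLu, hCu, hDu, hIu⟩ := ih u hut.1 hcu
    obtain ⟨hLt, hCt, hDt, hIt⟩ := ih (t.map (· - 1)) (by omega) hct'
    rw [phi_decomp u t ht]
    refine ⟨?_, ?_, ?_, ?_⟩
    · simp only [List.length_append, List.length_cons, List.length_map, hLt, hLu, hlt']
      omega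
    · exact isCat_comp hCt hCu
    · intro _
      have e1 : des (phi (t.map (· - 1)) ++ 0 :: (phi u).map (· + 1)) =
          des (phi (t.map (· - 1))) + des (0 :: (phi u).map (· + 1)) +
            (if phi (t.map (· - 1)) = [] then 0 else 1) :=
        des_append_zero _ _
      have e2 : des (0 :: (phi u).map (· + 1)) = des (phi u) := by
        rw [des_zero_cons (by simp), des_map_succ]
      have e3 : des (u ++ 0 :: t) = des u + des (0 :: t) + (if u = [] then 0 else 1) :=
        des_append_zero _ _
      have e4 : des (0 :: t) = des (t.map (· - 1)) := by
        rw [des_zero_cons ht, des_map_pred _ ht]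
      rw [e1, e2, e3, e4, hlen]
      have hu_facts : des (phi u) + des u + (if u = [] then 0 else 1) = u.length := by
        by_cases hu : u = []
        · subst hu; rw [phi_nil, if_pos rfl]; rfl
        · rw [if_neg hu]; have := hDu hu; omega
      have ht_facts : des (phi (t.map (· - 1))) + des (t.map (· - 1)) +
          (if phi (t.map (· - 1)) = [] then 0 else 1) = t.length := by
        by_cases htt : t = []
        · subst htt; simp only [List.map_nil, phi_nil, if_pos rfl]; rfl
        · have ht'ne : t.map (· - 1) ≠ [] := by simp [htt]
          have hpt : phi (t.map (· - 1)) ≠ [] := by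
            intro hc
            rw [← List.length_eq_zero_iff, hLt, List.length_eq_zero_iff] at hc
            exact ht'ne hc
          rw [if_neg hpt]
          have := hDt ht'ne
          rw [hlt'] at this
          omega
      omega
    · rw [phi_decomp _ _ (by simp)]
      have hms : ((phi u).map (· + 1)).map (· - 1) = phi u := by
        rw [List.map_map]
        exact List.map_congr_left (fun x _ => by simp) |>.trans (List.map_id _)
      rw [hms, hIu, hIt, map_pred_succ t ht]

lemma getD_eq_get {w : List ℕ} {i : ℕ} (h : i < w.length) :
    w.getD i 0 = w.get ⟨i, h⟩ := by
  simp [List.getD_eq_getElem?_getD, List.getElem?_eq_getElem h]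

lemma mem_cat_iff {n : ℕ} {w : List ℕ} :
    w ∈ CatalanWord n ↔ w.length = n ∧ IsCat w := by
  constructor
  · rintro ⟨h1, h2, h3⟩
    refine ⟨h1, h2, ?_⟩
    rw [List.Chain', List.isChain_iff_getElem]
    intro i hi
    have hi1 : i < w.length := by omega
    have hi2 : i + 1 < w.length := by omega
    have := h3 i (by omega)
    rwa [getD_eq_get hi2, getD_eq_get hi1] at this
  · rintro ⟨h1, h2, h3⟩
    refine ⟨h1, h2, ?_⟩
    intro i hi
    have hi1 : i < w.length := by omega
    have hi2 : i + 1 < w.length := by omega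
    rw [getD_eq_get hi2, getD_eq_get hi1]
    exact List.isChain_iff_getElem.mp h3 i (by omega)

lemma card_filter_des : ∀ w : List ℕ,
    ((Finset.range (w.length - 1)).filter (fun i => w.getD (i+1) 0 ≤ w.getD i 0)).card = des w
  | [] => by simp [des]
  | [a] => by simp [des]
  | a :: b :: t => by
      have ih := card_filter_des (b :: t)
      rw [Finset.card_filter] at ih ⊢
      have hl : (a :: b :: t).length - 1 = ((b :: t).length - 1) + 1 := by simp
      rw [hl, Finset.sum_range_succ']
      simp only [List.getD_cons_succ, List.getD_cons_zero] at ih ⊢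
      rw [ih]
      simp only [des]
      omega

lemma card_filter_asc : ∀ w : List ℕ,
    ((Finset.range (w.length - 1)).filter (fun i => w.getD i 0 < w.getD (i+1) 0)).card = asc w
  | [] => by simp [asc]
  | [a] => by simp [asc]
  | a :: b :: t => by
      have ih := card_filter_asc (b :: t)
      rw [Finset.card_filter] at ih ⊢
      have hl : (a :: b :: t).length - 1 = ((b :: t).length - 1) + 1 := by simp
      rw [hl, Finset.sum_range_succ']
      simp only [List.getD_cons_succ, List.getD_cons_zero] at ih ⊢
      rw [ih]
      simp only [asc]
      omega

lemma ascRuns_eq (w : List ℕ) : ascRuns w = 1 + des w := by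
  rw [ascRuns, card_filter_des]

lemma wDescRuns_eq (w : List ℕ) : wDescRuns w = 1 + asc w := by
  rw [wDescRuns, card_filter_asc]


/-- The number of Catalan words of length `n` with exactly `k` runs of weak descents
equals the number of Catalan words of length `n` with exactly `k` runs of ascents. -/
theorem wDescRuns_count_eq_ascRuns_count (n k : ℕ) (hn : 1 ≤ n) (hk : 1 ≤ k) :
    Nat.card {w : List ℕ | w ∈ CatalanWord n ∧ wDescRuns w = k} =
      Nat.card {w : List ℕ | w ∈ CatalanWord n ∧ ascRuns w = k} := by
  have key : ∀ w : List ℕ, w ∈ CatalanWord n →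
      phi w ∈ CatalanWord n ∧ ascRuns (phi w) = wDescRuns w ∧
      wDescRuns (phi w) = ascRuns w ∧ phi (phi w) = w := by
    intro w hw
    obtain ⟨hlen, hcat⟩ := mem_cat_iff.mp hw
    obtain ⟨hL, hC, hD, hI⟩ := phi_main w.length w le_rfl hcat
    have hne : w ≠ [] := by
      intro hc; subst hc; simp at hlen; omega
    have hpne : phi w ≠ [] := by
      intro hc; rw [← List.length_eq_zero_iff, hL, List.length_eq_zero_iff] at hc; exact hne hc
    have h1 := hD hne
    have h2 := des_add_asc w hne
    have h3 := des_add_asc (phi w) hpne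
    rw [hL] at h3
    refine ⟨mem_cat_iff.mpr ⟨hL.trans hlen, hC⟩, ?_, ?_, hI⟩
    · rw [ascRuns_eq, wDescRuns_eq]; omega
    · rw [ascRuns_eq, wDescRuns_eq]; omega
  apply Nat.card_congr
  refine ⟨fun x => ⟨phi x.1, (key x.1 x.2.1).1, by rw [(key x.1 x.2.1).2.1, x.2.2]⟩,
          fun y => ⟨phi y.1, (key y.1 y.2.1).1, by rw [(key y.1 y.2.1).2.2.1, y.2.2]⟩,
          fun x => ?_, fun y => ?_⟩
  · exact Subtype.ext ((key x.1 x.2.1).2.2.2)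
  · exact Subtype.ext ((key y.1 y.2.1).2.2.2)
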